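/- Let σ ∈ (0, 1/2) and let {p_k} ⊆ Ω be a damped Newton sequence: for every k, X(p_k) ≠ 0, DX(p_k) is invertible, v_k = −(DX(p_k))⁻¹ X(p_k), α_k = 2^{−j_k} where j_k is the least natural number j such that φ(p_k + 2^{−j} v_k) ≤ φ(p_k) − σ 2^{−j} ‖X(p_k)‖², and p_{k+1} = p_k + α_k v_k. Suppose p̄ ∈ Ω is an accumulation point of {p_k} (some subsequence p_{k_j} → p̄), X is differentiable on Ω, the map p ↦ DX(p) is continuous at p̄, and DX(p̄) is invertible. Then X(p̄) = 0, i.e. p̄ is a singularity of X. -/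

import Mathlib

open Filter Set

/-- Any accumulation point `p̄` of a damped Newton sequence (Newton
directions `v k = -(DX (p k))⁻¹ (X (p k))`, Armijo backtracking stepsizes
`α k = 2^{-(j k)}` with `j k` least, update `p (k+1) = p k + α k • v k`) at which `DX`
is continuous and `DX p̄` is invertible is a singularity of `X`. -/
theorem damped_newton_accumulation_point_is_singularity {E : Type*}
    [NormedAddCommGroup E] [InnerProductSpace ℝ E] [FiniteDimensional ℝ E]
    (Ω : Set E) (hΩ : IsOpen Ω) (X : E → E) (DX : E → (E →L[ℝ] E))
    (hX : ∀ q ∈ Ω, HasFDerivAt X (DX q) q)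
    (σ : ℝ) (hσ0 : 0 < σ) (hσ1 : σ < 1 / 2)
    (p v : ℕ → E) (j : ℕ → ℕ)
    (hpΩ : ∀ k, p k ∈ Ω)
    (hXk : ∀ k, X (p k) ≠ 0)
    (hIU : ∀ k, IsUnit (DX (p k)))
    (hv : ∀ k, v k = -(Ring.inverse (DX (p k)) (X (p k))))
    (harmijo : ∀ k, (1 / 2 : ℝ) * ‖X (p k + ((1 / 2 : ℝ) ^ j k) • v k)‖ ^ 2 ≤
        (1 / 2 : ℝ) * ‖X (p k)‖ ^ 2 - σ * (1 / 2 : ℝ) ^ j k * ‖X (p k)‖ ^ 2)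
    (hleast : ∀ k, ∀ i < j k,
        ¬ ((1 / 2 : ℝ) * ‖X (p k + ((1 / 2 : ℝ) ^ i) • v k)‖ ^ 2 ≤
          (1 / 2 : ℝ) * ‖X (p k)‖ ^ 2 - σ * (1 / 2 : ℝ) ^ i * ‖X (p k)‖ ^ 2))
    (hrec : ∀ k, p (k + 1) = p k + ((1 / 2 : ℝ) ^ j k) • v k)
    (pbar : E) (hpbar : pbar ∈ Ω)
    (φs : ℕ → ℕ) (hmono : StrictMono φs)
    (hacc : Filter.Tendsto (p ∘ φs) Filter.atTop (nhds pbar))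
    (hcont : ContinuousAt DX pbar)
    (hinv : IsUnit (DX pbar)) :
    X pbar = 0 := by
  by_contra hX0
  -- merit values
  set φ : ℕ → ℝ := fun k => ‖X (p k)‖ ^ 2 with hφdef
  have hφpos : ∀ k, 0 < φ k := fun k =>
    pow_pos (norm_pos_iff.mpr (hXk k)) 2
  -- step decrease
  have hstep : ∀ k, φ (k + 1) ≤ φ k - 2 * σ * (1 / 2 : ℝ) ^ j k * φ k := by
    intro k
    have h := harmijo k
    rw [← hrec k] at h
    simp only [hφdef]; linarith
  have hαpos : ∀ k, (0 : ℝ) < (1 / 2 : ℝ) ^ j k := fun k => by positivity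
  have hanti : Antitone φ := by
    apply antitone_nat_of_succ_le
    intro k
    have h1 := hstep k
    have h2 : 0 ≤ 2 * σ * (1 / 2 : ℝ) ^ j k * φ k := by positivity
    linarith
  have hbdd : BddBelow (Set.range φ) := ⟨0, fun x ⟨k, hk⟩ => hk ▸ (hφpos k).le⟩
  have hφlim0 : Tendsto φ atTop (nhds (⨅ k, φ k)) := tendsto_atTop_ciInf hanti hbdd
  -- X is continuous at pbar
  have hXc : ContinuousAt X pbar := (hX pbar hpbar).continuousAt
  have hφsublim : Tendsto (fun n => φ (φs n)) atTop (nhds (‖X pbar‖ ^ 2)) := by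
    have : Tendsto (fun n => X (p (φs n))) atTop (nhds (X pbar)) := hXc.tendsto.comp hacc
    exact ((continuous_norm.tendsto _).comp this).pow 2
  set L : ℝ := ‖X pbar‖ ^ 2 with hLdef
  have hL : 0 < L := pow_pos (norm_pos_iff.mpr hX0) 2
  have hinfL : (⨅ k, φ k) = L :=
    tendsto_nhds_unique (hφlim0.comp hmono.tendsto_atTop) hφsublim
  have hφlim : Tendsto φ atTop (nhds L) := hinfL ▸ hφlim0
  -- stepsize * merit → 0
  have hdiff : Tendsto (fun k => φ k - φ (k + 1)) atTop (nhds 0) := by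
    have h2 : Tendsto (fun k => φ (k + 1)) atTop (nhds L) :=
      hφlim.comp (tendsto_add_atTop_nat 1)
    simpa using hφlim.sub h2
  have hαφ : Tendsto (fun k => (1 / 2 : ℝ) ^ j k * φ k) atTop (nhds 0) := by
    have hsq : Tendsto (fun k => 2 * σ * ((1 / 2 : ℝ) ^ j k * φ k)) atTop (nhds 0) := by
      apply squeeze_zero (g := fun k => φ k - φ (k + 1)) (fun k => by positivity)
        (fun k => by
          have h := hstep k
          have he : 2 * σ * ((1 / 2 : ℝ) ^ j k * φ k)
              = 2 * σ * (1 / 2 : ℝ) ^ j k * φ k := by ring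
          linarith)
      exact hdiff
    have := hsq.const_mul (1 / (2 * σ))
    simp only [mul_zero] at this
    convert this using 2 with k
    field_simp
  -- stepsize along subsequence → 0
  have hα : Tendsto (fun n => ((1 / 2 : ℝ) ^ j (φs n))) atTop (nhds 0) := by
    have h1 : Tendsto (fun n => (1 / 2 : ℝ) ^ j (φs n) * φ (φs n)) atTop (nhds 0) :=
      hαφ.comp hmono.tendsto_atTop
    have h2 := h1.div hφsublim hL.ne'
    simp only [zero_div] at h2
    convert h2 using 2 with n
    rw [Pi.div_apply]
    field_simp [(hφpos (φs n)).ne']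
  -- v along subsequence converges
  set vbar : E := -(Ring.inverse (DX pbar) (X pbar)) with hvbardef
  have hDXlim : Tendsto (fun n => DX (p (φs n))) atTop (nhds (DX pbar)) :=
    hcont.tendsto.comp hacc
  have hinvlim : Tendsto (fun n => Ring.inverse (DX (p (φs n)))) atTop
      (nhds (Ring.inverse (DX pbar))) := by
    obtain ⟨u, hu⟩ := hinv
    have := (NormedRing.inverse_continuousAt u).tendsto
    rw [hu] at this
    exact this.comp hDXlim
  have hXplim : Tendsto (fun n => X (p (φs n))) atTop (nhds (X pbar)) :=
    hXc.tendsto.comp hacc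
  have happly : Continuous (fun q : (E →L[ℝ] E) × E => q.1 q.2) :=
    isBoundedBilinearMap_apply.continuous
  have hvlim : Tendsto (fun n => v (φs n)) atTop (nhds vbar) := by
    have h1 : Tendsto (fun n => (Ring.inverse (DX (p (φs n))), X (p (φs n))))
        atTop (nhds (Ring.inverse (DX pbar), X pbar)) := hinvlim.prodMk_nhds hXplim
    have h2 := (happly.tendsto _).comp h1
    simp only [hv]
    exact h2.neg
  -- the merit gradient pairing G
  set G : E × E → ℝ := fun qw => (inner ℝ (X qw.1) (DX qw.1 qw.2) : ℝ) with hGdef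
  have hGcont : ContinuousAt G (pbar, vbar) := by
    have h1 : ContinuousAt (fun qw : E × E => X qw.1) (pbar, vbar) :=
      hXc.comp (continuousAt_fst)
    have h2 : ContinuousAt (fun qw : E × E => DX qw.1 qw.2) (pbar, vbar) := by
      have : ContinuousAt (fun qw : E × E => (DX qw.1, qw.2)) (pbar, vbar) :=
        (hcont.comp continuousAt_fst).prodMk continuousAt_snd
      exact (happly.continuousAt).comp this
    exact continuous_inner.continuousAt.comp (h1.prodMk h2)
  have hGval : G (pbar, vbar) = -L := by
    have hc : DX pbar vbar = -(X pbar) := by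
      rw [hvbardef, map_neg]
      congr 1
      have : (DX pbar * Ring.inverse (DX pbar)) (X pbar) = X pbar := by
        rw [Ring.mul_inverse_cancel _ hinv]; rfl
      exact this
    simp only [hGdef, hc, inner_neg_right, real_inner_self_eq_norm_sq, hLdef]
  -- epsilon-delta setup
  set ε : ℝ := L / 8 with hεdef
  have hε : 0 < ε := by positivity
  obtain ⟨δG, hδG, hGball⟩ := Metric.continuousAt_iff.mp hGcont ε hε
  obtain ⟨δΩ, hδΩ, hballΩ⟩ := Metric.isOpen_iff.mp hΩ pbar hpbar
  set δ : ℝ := min δG δΩ with hδdef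
  have hδ : 0 < δ := lt_min hδG hδΩ
  -- collect eventual facts
  have ev1 : ∀ᶠ n in atTop, dist (p (φs n)) pbar < δ / 4 := by
    have := Metric.tendsto_nhds.mp hacc (δ / 4) (by positivity)
    exact this
  have ev2 : ∀ᶠ n in atTop, ‖v (φs n) - vbar‖ < δ / 2 := by
    have := Metric.tendsto_nhds.mp hvlim (δ / 2) (by positivity)
    simpa [dist_eq_norm] using this
  have ev4 : ∀ᶠ n in atTop, 1 ≤ j (φs n) := by
    filter_upwards [Metric.tendsto_nhds.mp hα (1 / 2) (by norm_num)] with n hn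
    rcases Nat.eq_zero_or_pos (j (φs n)) with h | h
    · rw [Real.dist_eq, sub_zero, h, pow_zero] at hn
      norm_num at hn
    · exact h
  have ev3 : ∀ᶠ n in atTop,
      2 * (1 / 2 : ℝ) ^ j (φs n) * (‖vbar‖ + δ / 2) < δ / 4 := by
    have hT : Tendsto (fun n => 2 * (1 / 2 : ℝ) ^ j (φs n) * (‖vbar‖ + δ / 2))
        atTop (nhds 0) := by
      have := (hα.const_mul 2).mul_const (‖vbar‖ + δ / 2)
      simpa using this
    have := Metric.tendsto_nhds.mp hT (δ / 4) (by positivity)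
    filter_upwards [this] with n hn
    rw [Real.dist_eq, sub_zero, abs_of_nonneg (by positivity)] at hn
    exact hn
  have ev5 : ∀ᶠ n in atTop, φ (φs n) < L + ε := by
    have := Metric.tendsto_nhds.mp hφsublim ε hε
    filter_upwards [this] with n hn
    rw [Real.dist_eq] at hn
    have := abs_lt.mp hn
    linarith [this.1, this.2]
  obtain ⟨n, h1, h2, h4, h3, h5⟩ := (ev1.and (ev2.and (ev4.and (ev3.and ev5)))).exists
  -- now the mean value theorem argument at index k = φs n
  set k : ℕ := φs n with hkdef
  set T : ℝ := (1 / 2 : ℝ) ^ (j k - 1) with hTdef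
  have hT0 : 0 < T := by positivity
  have hT2 : T = 2 * (1 / 2 : ℝ) ^ j k := by
    have hpw : (1 / 2 : ℝ) ^ j k = (1 / 2 : ℝ) * T := by
      rw [hTdef, ← pow_succ']
      congr 1
      omega
    rw [hpw]; ring
  have hvk : ‖v k‖ < ‖vbar‖ + δ / 2 := by
    calc ‖v k‖ ≤ ‖vbar‖ + ‖v k - vbar‖ := by
          have := norm_sub_norm_le (v k) vbar; linarith [norm_sub_rev (v k) vbar ▸ this]
      _ < ‖vbar‖ + δ / 2 := by linarith
  have hTv : T * ‖v k‖ < δ / 4 := by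
    rw [hT2]
    calc 2 * (1 / 2 : ℝ) ^ j k * ‖v k‖ ≤ 2 * (1 / 2 : ℝ) ^ j k * (‖vbar‖ + δ / 2) := by
          apply mul_le_mul_of_nonneg_left hvk.le (by positivity)
      _ < δ / 4 := h3
  -- points on the segment are in Ω and close to pbar
  have hseg : ∀ t ∈ Icc (0 : ℝ) T, dist (p k + t • v k) pbar < δ / 2 := by
    intro t ht
    have : dist (p k + t • v k) pbar ≤ dist (p k) pbar + ‖t • v k‖ := by
      rw [dist_eq_norm, dist_eq_norm]
      calc ‖p k + t • v k - pbar‖ = ‖(p k - pbar) + t • v k‖ := by congr 1; abel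
        _ ≤ ‖p k - pbar‖ + ‖t • v k‖ := norm_add_le _ _
    have htv : ‖t • v k‖ ≤ T * ‖v k‖ := by
      rw [norm_smul, Real.norm_eq_abs, abs_of_nonneg ht.1]
      exact mul_le_mul_of_nonneg_right ht.2 (norm_nonneg _)
    have := h1
    linarith
  have hsegΩ : ∀ t ∈ Icc (0 : ℝ) T, p k + t • v k ∈ Ω := by
    intro t ht
    apply hballΩ
    exact Metric.mem_ball.mpr (lt_of_lt_of_le (hseg t ht) (by
      have : δ ≤ δΩ := min_le_right _ _
      linarith))
  set f : ℝ → ℝ := fun t => ‖X (p k + t • v k)‖ ^ 2 with hfdef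
  set f' : ℝ → ℝ := fun t => 2 * G (p k + t • v k, v k) with hf'def
  have hderiv : ∀ t ∈ Icc (0 : ℝ) T, HasDerivAt f (f' t) t := by
    intro t ht
    have hq := hsegΩ t ht
    have hc : HasDerivAt (fun s : ℝ => p k + s • v k) (v k) t := by
      have := ((hasDerivAt_id t).smul_const (v k)).const_add (p k)
      simpa using this
    have hXq : HasDerivAt (fun s => X (p k + s • v k)) (DX (p k + t • v k) (v k)) t :=
      (hX _ hq).comp_hasDerivAt t hc
    have hInner := hXq.inner ℝ hXq
    have heq : (fun s => (inner ℝ (X (p k + s • v k)) (X (p k + s • v k)) : ℝ)) = f := by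
      funext s
      rw [hfdef, real_inner_self_eq_norm_sq]
    rw [heq] at hInner
    refine hInner.congr_deriv ?_
    rw [hf'def, hGdef]
    simp only [real_inner_comm (X (p k + t • v k))]
    ring
  have hcontOn : ContinuousOn f (Icc 0 T) := fun t ht =>
    (hderiv t ht).continuousAt.continuousWithinAt
  obtain ⟨c, hc, hceq⟩ := exists_hasDerivAt_eq_slope f f' hT0 hcontOn
    (fun x hx => hderiv x (Ioo_subset_Icc_self hx))
  -- from minimality of j k, the Armijo test fails at i = j k - 1
  have hfail := hleast k (j k - 1) (by omega)
  push_neg at hfail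
  rw [← hTdef] at hfail
  have hf0 : f 0 = φ k := by simp [hfdef, hφdef]
  have hfT : f T - f 0 > -(2 * σ * T * φ k) := by
    rw [hf0]
    have : (1 / 2 : ℝ) * f T > (1 / 2) * φ k - σ * T * φ k := hfail
    linarith
  have hslope : f' c > -(2 * σ * φ k) := by
    rw [hceq, sub_zero, gt_iff_lt, lt_div_iff₀ hT0]
    calc -(2 * σ * φ k) * T = -(2 * σ * T * φ k) := by ring
      _ < f T - f 0 := hfT
  have hGξ : G (p k + c • v k, v k) > -(σ * φ k) := by
    simp only [hf'def] at hslope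
    linarith
  -- the point (ξ, v k) is δ-close to (pbar, vbar)
  have hclose : dist (p k + c • v k, v k) (pbar, vbar) < δ := by
    rw [Prod.dist_eq]
    apply max_lt
    · exact lt_of_lt_of_le (hseg c ⟨hc.1.le, hc.2.le⟩) (by linarith)
    · rw [dist_eq_norm]; linarith
  have hGnear := hGball (lt_of_lt_of_le hclose (min_le_left _ _))
  rw [hGval, Real.dist_eq] at hGnear
  have hGnear' := abs_lt.mp hGnear
  -- final contradiction
  have hφkpos := hφpos k
  clear_value f f' T G vbar ε δ L φ k
  have hσφ1 : σ * φ k < σ * (L + ε) := mul_lt_mul_of_pos_left h5 hσ0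
  have hpos : (0 : ℝ) < L + ε := by linarith only [hL, hε]
  have hσφ2 : σ * (L + ε) < (1 / 2) * (L + ε) := by
    have hm := mul_pos (show (0 : ℝ) < 1 / 2 - σ by linarith only [hσ1]) hpos
    have hr : (1 / 2 - σ) * (L + ε) = 1 / 2 * (L + ε) - σ * (L + ε) := by ring
    linarith only [hm, hr]
  linarith only [hGnear'.1, hGnear'.2, hGξ, hσφ1, hσφ2, hL, hεdef]
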